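/- Shorter truncations yield weakly better outcomes for all women: if P₁ and P₂ are truncated profiles for the manipulators such that each manipulator's women-optimal stable partner remains on her list in both, and |P₁(w)| ≤ |P₂(w)| for every manipulator w, then the men-optimal stable matching under P₁ is weakly preferred by every woman to the men-optimal stable matching under P₂. -/

import Mathlib

open List

/-- A stable-matching instance: each agent has a strict preference order
(a duplicate-free list, earlier = more preferred) over a subset of the other side. -/
structure SMInstance (M W : Type*) where
  mpref : M → List W
  wpref : W → List M
  mnodup : ∀ m, (mpref m).Nodup
  wnodup : ∀ w, (wpref w).Nodup

/-- A matching: a pairing of men and women (agents may be unmatched),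
involutive on matched pairs. -/
structure Matching (M W : Type*) where
  μm : M → Option W
  μw : W → Option M
  consistent : ∀ m w, μm m = some w ↔ μw w = some m

section Defs

variable {M W : Type*} [DecidableEq M] [DecidableEq W]

/-- Man `m` strictly prefers woman `w` to the (possibly empty) assignment `o`. -/
def SMInstance.mPref (I : SMInstance M W) (m : M) (w : W) : Option W → Prop
  | some w' => w ∈ I.mpref m ∧ (w' ∉ I.mpref m ∨ (I.mpref m).idxOf w < (I.mpref m).idxOf w')
  | none => w ∈ I.mpref m

/-- Woman `w` strictly prefers man `m` to the (possibly empty) assignment `o`. -/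
def SMInstance.wPref (I : SMInstance M W) (w : W) (m : M) : Option M → Prop
  | some m' => m ∈ I.wpref w ∧ (m' ∉ I.wpref w ∨ (I.wpref w).idxOf m < (I.wpref w).idxOf m')
  | none => m ∈ I.wpref w

/-- Man `m` weakly prefers assignment `o₁` to assignment `o₂`. -/
def SMInstance.mWeak (I : SMInstance M W) (m : M) (o₁ o₂ : Option W) : Prop :=
  o₁ = o₂ ∨ ∃ w, o₁ = some w ∧ I.mPref m w o₂

/-- Woman `w` weakly prefers assignment `o₁` to assignment `o₂`. -/
def SMInstance.wWeak (I : SMInstance M W) (w : W) (o₁ o₂ : Option M) : Prop :=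
  o₁ = o₂ ∨ ∃ m, o₁ = some m ∧ I.wPref w m o₂

def IndivRational (I : SMInstance M W) (μ : Matching M W) : Prop :=
  ∀ m w, μ.μm m = some w → w ∈ I.mpref m ∧ m ∈ I.wpref w

def BlockingPair (I : SMInstance M W) (μ : Matching M W) (m : M) (w : W) : Prop :=
  μ.μm m ≠ some w ∧ I.mPref m w (μ.μm m) ∧ I.wPref w m (μ.μw w)

def IsStable (I : SMInstance M W) (μ : Matching M W) : Prop :=
  IndivRational I μ ∧ ∀ m w, ¬ BlockingPair I μ m w

/-- The men-optimal stable matching (= output of men-proposing Gale–Shapley). -/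
def IsMenOptimal (I : SMInstance M W) (μ : Matching M W) : Prop :=
  IsStable I μ ∧ ∀ μ', IsStable I μ' → ∀ m, I.mWeak m (μ.μm m) (μ'.μm m)

/-- The women-optimal stable matching. -/
def IsWomenOptimal (I : SMInstance M W) (μ : Matching M W) : Prop :=
  IsStable I μ ∧ ∀ μ', IsStable I μ' → ∀ w, I.wWeak w (μ.μw w) (μ'.μw w)

/-- `I'` arises from `I` by arbitrary misreports of the women in `L`
(all men and all women outside `L` are truthful). -/
def GeneralManip (I I' : SMInstance M W) (L : Set W) : Prop :=
  I'.mpref = I.mpref ∧ ∀ w ∉ L, I'.wpref w = I.wpref w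

/-- `I'` arises from `I` by truncation (prefix) misreports of the women in `L`. -/
def TruncManip (I I' : SMInstance M W) (L : Set W) : Prop :=
  GeneralManip I I' L ∧ ∀ w ∈ L, (I'.wpref w) <+: (I.wpref w)

/-- `I'` arises from `I` by permutation misreports of the women in `L`. -/
def PermManip (I I' : SMInstance M W) (L : Set W) : Prop :=
  GeneralManip I I' L ∧ ∀ w ∈ L, (I'.wpref w).Perm (I.wpref w)

/-- Woman `w` is strictly better off in `μ₁` than in `μ₂` (true preferences). -/
def wStrictBetter (I : SMInstance M W) (w : W) (μ₁ μ₂ : Matching M W) : Prop :=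
  ∃ m, μ₁.μw w = some m ∧ I.wPref w m (μ₂.μw w)

/-- The set `δ(w)` of suitors of `w` at matching `μ`: the men who prefer `w`
to their own partner in `μ`. -/
def suitorSet (I : SMInstance M W) (μ : Matching M W) (w : W) : Set M :=
  {m | I.mPref m w (μ.μm m)}

/-- The suitor graph of Kobayashi–Matsui, on vertices `M ⊕ W ⊕ {s}`. -/
inductive SuitorEdge (I : SMInstance M W) (L : Set W) (μ : Matching M W) :
    M ⊕ W ⊕ Unit → M ⊕ W ⊕ Unit → Prop
  | partner_wm (w : W) (m : M) : μ.μw w = some m →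
      SuitorEdge I L μ (Sum.inr (Sum.inl w)) (Sum.inl m)
  | partner_mw (w : W) (m : M) : μ.μw w = some m →
      SuitorEdge I L μ (Sum.inl m) (Sum.inr (Sum.inl w))
  | suitor_manip (w : W) (m : M) : w ∈ L → m ∈ suitorSet I μ w →
      SuitorEdge I L μ (Sum.inl m) (Sum.inr (Sum.inl w))
  | suitor_honest (w : W) (m : M) : w ∉ L → m ∈ suitorSet I μ w →
      (∀ m' ∈ suitorSet I μ w, m' ≠ m → (I.wpref w).idxOf m < (I.wpref w).idxOf m') →
      SuitorEdge I L μ (Sum.inl m) (Sum.inr (Sum.inl w))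
  | fromSource (w : W) : suitorSet I μ w = ∅ →
      SuitorEdge I L μ (Sum.inr (Sum.inr ())) (Sum.inr (Sum.inl w))

/-- Reachability in the suitor graph. -/
abbrev SReach (I : SMInstance M W) (L : Set W) (μ : Matching M W) :
    (M ⊕ W ⊕ Unit) → (M ⊕ W ⊕ Unit) → Prop :=
  Relation.ReflTransGen (SuitorEdge I L μ)

/-- A reduced table (shortlists) for instance `I`: sublists of the true lists,
with mutual membership, where each man is engaged to the head of his reduced list,
each woman to the last man of hers, and every removed man is worse for the woman
than her current partner. -/
structure ReducedTable (I : SMInstance M W) where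
  rm : M → List W
  rw : W → List M
  rmSub : ∀ m, (rm m).Sublist (I.mpref m)
  rwSub : ∀ w, (rw w).Sublist (I.wpref w)
  mem_iff : ∀ m w, w ∈ rm m ↔ m ∈ rw w
  engaged : ∀ m w, (rm m).head? = some w ↔ (rw w).getLast? = some m
  removed_worse : ∀ m w p, m ∈ I.wpref w → m ∉ rw w → (rw w).getLast? = some p →
      (I.wpref w).idxOf p < (I.wpref w).idxOf m

/-- A rotation: a cyclic sequence of (distinct) men `m₀,…,m_{r-1}`
together with their current partners `w₀,…,w_{r-1}`. -/
structure Rot (M W : Type*) where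
  r : ℕ
  hr : 2 ≤ r
  ms : Fin r → M
  ws : Fin r → W
  inj : Function.Injective ms

/-- Cyclic successor of an index of a rotation. -/
def Rot.nxt (R : Rot M W) (i : Fin R.r) : Fin R.r :=
  ⟨((i : ℕ) + 1) % R.r, Nat.mod_lt _ (by have := R.hr; omega)⟩

/-- The reduced list of woman `w` determined by the stable matching `μ`:
the men weakly preferred to her current partner. -/
def reducedListW (I : SMInstance M W) (μ : Matching M W) (w : W) : List M :=
  match μ.μw w with
  | some p => (I.wpref w).filter (fun m => decide ((I.wpref w).idxOf m ≤ (I.wpref w).idxOf p))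
  | none => []

/-- The reduced list of man `m` determined by the stable matching `μ`. -/
def reducedListM (I : SMInstance M W) (μ : Matching M W) (m : M) : List W :=
  (I.mpref m).filter (fun w => decide (m ∈ reducedListW I μ w))

/-- The rotation `R` is exposed in (the reduced table of) the matching `μ`:
`w_i` is first and `w_{i+1}` second on `m_i`'s reduced list. -/
def Exposed (I : SMInstance M W) (μ : Matching M W) (R : Rot M W) : Prop :=
  ∀ i, (reducedListM I μ (R.ms i)).head? = some (R.ws i) ∧
       (reducedListM I μ (R.ms i))[1]? = some (R.ws (R.nxt i))

/-- `μ'` is the matching obtained from `μ` by eliminating the rotation `R`: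
each `m_i` is now matched with `w_{i+1}`, everyone else is unchanged. -/
def ElimStep (R : Rot M W) (μ μ' : Matching M W) : Prop :=
  (∀ i, μ'.μm (R.ms i) = some (R.ws (R.nxt i))) ∧
  ∀ m, (∀ i, m ≠ R.ms i) → μ'.μm m = μ.μm m

/-- `ElimSeq I μ S μ'`: the matching `μ'` is obtained from `μ` by successively
eliminating the (exposed-at-the-time) rotations of the set `S`. -/
inductive ElimSeq (I : SMInstance M W) : Matching M W → Set (Rot M W) → Matching M W → Prop
  | refl (μ : Matching M W) : ElimSeq I μ ∅ μ
  | step {μ μ' μ'' : Matching M W} {R : Rot M W} {S : Set (Rot M W)} :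
      Exposed I μ R → ElimStep R μ μ' → ElimSeq I μ' S μ'' → ElimSeq I μ (insert R S) μ''

/-- The rotation `R` moves man `m` from woman `w` to woman `w'`. -/
def Moves (R : Rot M W) (m : M) (w w' : W) : Prop :=
  ∃ i, R.ms i = m ∧ R.ws i = w ∧ R.ws (R.nxt i) = w'

/-- `R₁` explicitly precedes `R₂`: they share a man `m` such that `R₁` moves `m`
to some woman `w` and `R₂` moves `m` away from `w`. -/
def ExplicitPrec (R₁ R₂ : Rot M W) : Prop :=
  ∃ m w w₁ w₂, Moves R₁ m w₁ w ∧ Moves R₂ m w w₂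

/-- The precedence relation `≺`: transitive closure of explicit precedence. -/
def Prec (R₁ R₂ : Rot M W) : Prop :=
  Relation.TransGen ExplicitPrec R₁ R₂

/-- `R` is a rotation of the instance `I`: it is exposed at some matching
obtained from the men-optimal matching by eliminating rotations. -/
def IsRotOf (I : SMInstance M W) (R : Rot M W) : Prop :=
  ∃ μ0 S μ', IsMenOptimal I μ0 ∧ ElimSeq I μ0 S μ' ∧ Exposed I μ' R

/-- A closed (downward-closed under `≺`) set of rotations of the instance `I`. -/
def IsClosedSet (I : SMInstance M W) (𝓡 : Set (Rot M W)) : Prop :=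
  (∀ R ∈ 𝓡, IsRotOf I R) ∧ ∀ R ∈ 𝓡, ∀ R', IsRotOf I R' → Prec R' R → R' ∈ 𝓡

/-- The closed set `𝓡` can be eliminated: the matching obtained by eliminating it
is stable w.r.t. the true profile and is the men-optimal stable matching of some
profile in which only the women of `L` misreport. -/
def CanEliminate (I : SMInstance M W) (L : Set W) (𝓡 : Set (Rot M W)) : Prop :=
  ∃ μ0 μ', IsMenOptimal I μ0 ∧ ElimSeq I μ0 𝓡 μ' ∧ IsStable I μ' ∧
    ∃ I', GeneralManip I I' L ∧ IsMenOptimal I' μ'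

/-- `R` is a maximal rotation of the set `𝓡`. -/
def MaxRot (𝓡 : Set (Rot M W)) (R : Rot M W) : Prop :=
  R ∈ 𝓡 ∧ ∀ R' ∈ 𝓡, ¬ Prec R R'

/-- Whether man `m` proposes to woman `w` in the men-proposing Gale–Shapley run
whose outcome is `μ` (he proposes to every woman he weakly prefers to his final partner). -/
def proposedToB (I : SMInstance M W) (μ : Matching M W) (m : M) (w : W) : Bool :=
  decide (w ∈ I.mpref m) &&
    (match μ.μm m with
     | none => true
     | some w' => decide ((I.mpref m).idxOf w ≤ (I.mpref m).idxOf w'))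

/-- The proposal list `Pro(w)`: all men who proposed to `w`, ordered as in her stated list. -/
def proposals (I : SMInstance M W) (μ : Matching M W) (w : W) : List M :=
  (I.wpref w).filter (fun m => proposedToB I μ m w)

/-- `μ` is feasible for the permutation-manipulation game of coalition `L`. -/
def FeasibleM (I : SMInstance M W) (L : Set W) (μ : Matching M W) : Prop :=
  IsStable I μ ∧ ∃ I', PermManip I I' L ∧ IsMenOptimal I' μ

/-- `μ` is Pareto-optimal among feasible matchings (for the women). -/
def ParetoOptimal (I : SMInstance M W) (L : Set W) (μ : Matching M W) : Prop :=
  FeasibleM I L μ ∧ ¬∃ μ', FeasibleM I L μ' ∧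
    (∀ w, I.wWeak w (μ'.μw w) (μ.μw w)) ∧ (∃ w, wStrictBetter I w μ' μ)

/-- The reported profile `I'` with induced matching `μ` is a super-strong Nash
equilibrium of the permutation-manipulation game under the feasibility assumption. -/
def SuperStrongNE (I : SMInstance M W) (L : Set W) (I' : SMInstance M W)
    (μ : Matching M W) : Prop :=
  PermManip I I' L ∧ IsMenOptimal I' μ ∧ IsStable I μ ∧
  ∀ (Ls : Set W), Ls ⊆ L → ∀ I'' μ'',
    PermManip I I'' L → (∀ w ∉ Ls, I''.wpref w = I'.wpref w) →
    IsMenOptimal I'' μ'' → IsStable I μ'' →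
    ¬((∀ l ∈ Ls, I.wWeak l (μ''.μw l) (μ.μw l)) ∧ ∃ l ∈ Ls, wStrictBetter I l μ'' μ)

end Defs


section Helper

variable {M W : Type*} [DecidableEq M] [DecidableEq W]

lemma indexOf_of_prefix {α : Type*} [DecidableEq α] {l₁ l₂ : List α} (h : l₁ <+: l₂) {a : α}
    (ha : a ∈ l₁) : l₂.idxOf a = l₁.idxOf a := by
  obtain ⟨t, rfl⟩ := h
  exact List.idxOf_append_of_mem ha

lemma length_le_indexOf_of_prefix {α : Type*} [DecidableEq α] {l₁ l₂ : List α} (h : l₁ <+: l₂)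
    {a : α} (ha : a ∉ l₁) : l₁.length ≤ l₂.idxOf a := by
  obtain ⟨t, rfl⟩ := h
  rw [List.idxOf_append_of_notMem ha]
  exact Nat.le_add_right _ _

lemma prefix_of_prefix_len {α : Type*} {l₁ l₂ l : List α} (h₁ : l₁ <+: l) (h₂ : l₂ <+: l)
    (hl : l₁.length ≤ l₂.length) : l₁ <+: l₂ := by
  obtain ⟨t, rfl⟩ := h₂
  have := List.prefix_iff_eq_take.mp h₁
  rw [List.take_append_of_le_length hl] at this
  rw [this]
  exact List.take_prefix _ _

lemma wPref_mem {I : SMInstance M W} {w : W} {m : M} {o : Option M} (h : I.wPref w m o) :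
    m ∈ I.wpref w := by
  cases o with
  | none => exact h
  | some p => exact h.1

lemma mPref_mem {I : SMInstance M W} {m : M} {w : W} {o : Option W} (h : I.mPref m w o) :
    w ∈ I.mpref m := by
  cases o with
  | none => exact h
  | some p => exact h.1

lemma mPref_congr {I J : SMInstance M W} (h : J.mpref = I.mpref) {m : M} {w : W} {o : Option W} :
    J.mPref m w o ↔ I.mPref m w o := by
  cases o <;> simp [SMInstance.mPref, h]

lemma wPref_transfer {I J : SMInstance M W} {w : W} (h : J.wpref w <+: I.wpref w) {m : M}
    {o : Option M} (hm : m ∈ J.wpref w) (ho : ∀ p, o = some p → p ∈ J.wpref w) :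
    (J.wPref w m o ↔ I.wPref w m o) := by
  cases o with
  | none =>
    constructor
    · intro _; exact h.subset hm
    · intro _; exact hm
  | some p =>
    have hp : p ∈ J.wpref w := ho p rfl
    have hpI : p ∈ I.wpref w := h.subset hp
    have hmI : m ∈ I.wpref w := h.subset hm
    have e1 : (I.wpref w).idxOf m = (J.wpref w).idxOf m := indexOf_of_prefix h hm
    have e2 : (I.wpref w).idxOf p = (J.wpref w).idxOf p := indexOf_of_prefix h hp
    constructor
    · rintro ⟨_, hno | hlt⟩
      · exact absurd hp hno
      · exact ⟨hmI, Or.inr (by omega)⟩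
    · rintro ⟨_, hno | hlt⟩
      · exact absurd hpI hno
      · exact ⟨hm, Or.inr (by omega)⟩

/-- Women-pessimality of the men-optimal stable matching. -/
lemma womenPessimal {I : SMInstance M W} {μ μ' : Matching M W} (h : IsMenOptimal I μ)
    (h' : IsStable I μ') : ∀ w, I.wWeak w (μ'.μw w) (μ.μw w) := by
  intro w
  rcases hmu : μ.μw w with _ | m
  · rcases hmu' : μ'.μw w with _ | m'
    · exact Or.inl rfl
    · exact Or.inr ⟨m', rfl, (h'.1 m' w ((μ'.consistent m' w).mpr hmu')).2⟩
  · by_cases he : μ'.μw w = some m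
    · exact Or.inl he
    · have hmm : μ.μm m = some w := (μ.consistent m w).mpr hmu
      have hmw : m ∈ I.wpref w := (h.1.1 m w hmm).2
      have hmnot : μ'.μm m ≠ some w := fun hc => he ((μ'.consistent m w).mp hc)
      have hmpref : I.mPref m w (μ'.μm m) := by
        rcases h.2 μ' h' m with heq | ⟨w', hw', hp⟩
        · rw [hmm] at heq; exact absurd heq.symm hmnot
        · rw [hmm] at hw'; injection hw' with hw'; rw [← hw'] at hp; exact hp
      rcases hmu' : μ'.μw w with _ | m'
      · exact absurd (show BlockingPair I μ' m w from
          ⟨hmnot, hmpref, by rw [hmu']; exact hmw⟩) (h'.2 m w)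
      · have hm'mm : μ'.μm m' = some w := (μ'.consistent m' w).mpr hmu'
        have hm' : m' ∈ I.wpref w := (h'.1 m' w hm'mm).2
        by_cases hlt : (I.wpref w).idxOf m' < (I.wpref w).idxOf m
        · exact Or.inr ⟨m', rfl, ⟨hm', Or.inr hlt⟩⟩
        · exfalso
          have hne : m ≠ m' := fun hc => he (hc ▸ hmu')
          have hidx : (I.wpref w).idxOf m ≠ (I.wpref w).idxOf m' :=
            fun hc => hne ((List.idxOf_inj hmw (y := m')).mp hc)
          have hlt' : (I.wpref w).idxOf m < (I.wpref w).idxOf m' := by omega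
          exact h'.2 m w ⟨hmnot, hmpref, by rw [hmu']; exact ⟨hmw, Or.inr hlt'⟩⟩

lemma card_matched [Fintype M] [Fintype W] (μ : Matching M W) :
    (Finset.univ.filter (fun w : W => (μ.μw w).isSome)).card =
      (Finset.univ.filter (fun m : M => (μ.μm m).isSome)).card := by
  apply Finset.card_bij (fun w hw => (μ.μw w).get (by simpa using (Finset.mem_filter.mp hw).2))
  · intro w hw
    have hs : (μ.μw w).isSome := by simpa using (Finset.mem_filter.mp hw).2
    have : μ.μw w = some ((μ.μw w).get hs) := (Option.some_get hs).symm
    have := (μ.consistent _ w).mpr this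
    simp [this]
  · intro w₁ h₁ w₂ h₂ he
    have hs₁ : (μ.μw w₁).isSome := by simpa using (Finset.mem_filter.mp h₁).2
    have hs₂ : (μ.μw w₂).isSome := by simpa using (Finset.mem_filter.mp h₂).2
    have e₁ : μ.μw w₁ = some ((μ.μw w₁).get hs₁) := (Option.some_get hs₁).symm
    have e₂ : μ.μw w₂ = some ((μ.μw w₂).get hs₂) := (Option.some_get hs₂).symm
    have c₁ := (μ.consistent _ w₁).mpr e₁
    have c₂ := (μ.consistent _ w₂).mpr e₂
    rw [he] at c₁
    rw [c₂] at c₁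
    injection c₁ with c₁
    exact c₁.symm
  · intro m hm
    have hs : (μ.μm m).isSome := by simpa using (Finset.mem_filter.mp hm).2
    obtain ⟨w, hw⟩ := Option.isSome_iff_exists.mp hs
    have hww : μ.μw w = some m := (μ.consistent m w).mp hw
    refine ⟨w, by simp [hww], ?_⟩
    simp [hww]

/-- Lone-wolf: a woman matched in some stable matching is matched in the men-optimal one. -/
lemma matched_of_menOptimal [Fintype M] [Fintype W] {I : SMInstance M W} {μ μ' : Matching M W}
    (h : IsMenOptimal I μ) (h' : IsStable I μ') {w : W} (hw : (μ'.μw w).isSome) :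
    (μ.μw w).isSome := by
  classical
  set sW := Finset.univ.filter (fun w : W => (μ.μw w).isSome) with hsW
  set sW' := Finset.univ.filter (fun w : W => (μ'.μw w).isSome) with hsW'
  set sM := Finset.univ.filter (fun m : M => (μ.μm m).isSome) with hsM
  set sM' := Finset.univ.filter (fun m : M => (μ'.μm m).isSome) with hsM'
  have hsub1 : sW ⊆ sW' := by
    intro x hx
    have hs : (μ.μw x).isSome := by simpa [hsW] using hx
    rcases womenPessimal h h' x with heq | ⟨m, hm, _⟩
    · simp [hsW', heq, hs]
    · simp [hsW', hm]
  have hsub2 : sM' ⊆ sM := by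
    intro m hm
    have hs : (μ'.μm m).isSome := by simpa [hsM'] using hm
    rcases h.2 μ' h' m with heq | ⟨w', hw', _⟩
    · simp [hsM, heq, hs]
    · simp [hsM, hw']
  have c1 : sW.card = sM.card := card_matched μ
  have c2 : sW'.card = sM'.card := card_matched μ'
  have heq : sW = sW' := by
    apply Finset.eq_of_subset_of_card_le hsub1
    calc sW'.card = sM'.card := c2
      _ ≤ sM.card := Finset.card_le_card hsub2
      _ = sW.card := c1.symm
  have hwin : w ∈ sW' := by simp [hsW', hw]
  rw [← heq] at hwin
  simpa [hsW] using hwin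

end Helper

/-- shorter truncations (still keeping the women-optimal partner)
yield weakly better outcomes for every woman. -/
theorem shorter_is_better {M W : Type*} [DecidableEq M] [DecidableEq W]
    [Fintype M] [Fintype W] (I I₁ I₂ : SMInstance M W) (L : Set W)
    (μW μ₁ μ₂ : Matching M W) (hW : IsWomenOptimal I μW)
    (h1 : TruncManip I I₁ L) (h2 : TruncManip I I₂ L)
    (hk1 : ∀ w ∈ L, ∀ m, μW.μw w = some m → m ∈ I₁.wpref w)
    (hk2 : ∀ w ∈ L, ∀ m, μW.μw w = some m → m ∈ I₂.wpref w)
    (hlen : ∀ w ∈ L, (I₁.wpref w).length ≤ (I₂.wpref w).length)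
    (ho1 : IsMenOptimal I₁ μ₁) (ho2 : IsMenOptimal I₂ μ₂) :
    ∀ w, I.wWeak w (μ₁.μw w) (μ₂.μw w) := by
  obtain ⟨⟨hm1, hL1⟩, htr1⟩ := h1
  obtain ⟨⟨hm2, hL2⟩, htr2⟩ := h2
  -- prefix facts
  have hp1 : ∀ w, I₁.wpref w <+: I.wpref w := by
    intro w; by_cases hw : w ∈ L
    · exact htr1 w hw
    · rw [hL1 w hw]
  have hp2 : ∀ w, I₂.wpref w <+: I.wpref w := by
    intro w; by_cases hw : w ∈ L
    · exact htr2 w hw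
    · rw [hL2 w hw]
  have hp12 : ∀ w, I₁.wpref w <+: I₂.wpref w := by
    intro w; by_cases hw : w ∈ L
    · exact prefix_of_prefix_len (htr1 w hw) (htr2 w hw) (hlen w hw)
    · rw [hL1 w hw, hL2 w hw]
  have hWstI : IsStable I μW := hW.1
  -- μW is stable in I₁ and I₂
  have hkeep1 : ∀ w m, μW.μw w = some m → m ∈ I₁.wpref w := by
    intro w m hm; by_cases hw : w ∈ L
    · exact hk1 w hw m hm
    · rw [hL1 w hw]; exact (hWstI.1 m w ((μW.consistent m w).mpr hm)).2
  have hkeep2 : ∀ w m, μW.μw w = some m → m ∈ I₂.wpref w := by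
    intro w m hm; by_cases hw : w ∈ L
    · exact hk2 w hw m hm
    · rw [hL2 w hw]; exact (hWstI.1 m w ((μW.consistent m w).mpr hm)).2
  have stable_trunc : ∀ (J : SMInstance M W), J.mpref = I.mpref →
      (∀ w, J.wpref w <+: I.wpref w) → ∀ (μ : Matching M W), IsStable I μ →
      (∀ w m, μ.μw w = some m → m ∈ J.wpref w) → IsStable J μ := by
    intro J hJm hJw μ hst hkeep
    constructor
    · intro m w hmw
      have h := hst.1 m w hmw
      exact ⟨by rw [hJm]; exact h.1, hkeep w m ((μ.consistent m w).mp hmw)⟩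
    · rintro m w ⟨hne, hmp, hwp⟩
      have hmem : m ∈ J.wpref w := wPref_mem hwp
      exact hst.2 m w ⟨hne, (mPref_congr hJm).mp hmp,
        (wPref_transfer (hJw w) hmem (fun p hp => hkeep w p hp)).mp hwp⟩
  have hWst1 : IsStable I₁ μW := stable_trunc I₁ hm1 hp1 μW hWstI hkeep1
  have hst1 : IsStable I₁ μ₁ := ho1.1
  -- the key step: μ₁ is stable in I₂
  have hst12 : IsStable I₂ μ₁ := by
    constructor
    · intro m w hmw
      have h := hst1.1 m w hmw
      exact ⟨by rw [hm2, ← hm1]; exact h.1, (hp12 w).subset h.2⟩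
    · rintro m w ⟨hne, hmp, hwp⟩
      have hmem2 : m ∈ I₂.wpref w := wPref_mem hwp
      by_cases hmem : m ∈ I₁.wpref w
      · -- blocking pair transfers down to I₁
        exact hst1.2 m w ⟨hne, (mPref_congr hm1).mpr ((mPref_congr hm2).mp hmp),
          (wPref_transfer (hp12 w) hmem
            (fun p hp => (hst1.1 p w ((μ₁.consistent p w).mpr hp)).2)).mpr hwp⟩
      · rcases hq : μ₁.μw w with _ | p
        · -- w unmatched in μ₁
          rw [hq] at hwp
          rcases hqW : μW.μw w with _ | pW
          · -- w unmatched in μW : compare m's partners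
            have hwmem : w ∈ I.mpref m := by
              have := mPref_mem hmp; rwa [hm2] at this
            have hmemI : m ∈ I.wpref w := (hp2 w).subset hmem2
            have hne' : μW.μm m ≠ some w := by
              intro hc
              rw [(μW.consistent m w).mp hc] at hqW
              cases hqW
            have hwpW : I.wPref w m (μW.μw w) := by rw [hqW]; exact hmemI
            have hnmp : ¬ I.mPref m w (μW.μm m) := fun hc => hWstI.2 m w ⟨hne', hc, hwpW⟩
            rcases hr : μW.μm m with _ | w''
            · exact hnmp (by rw [hr]; exact hwmem)
            · rw [hr] at hnmp
              have hw'' : w'' ∈ I.mpref m := (hWstI.1 m w'' hr).1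
              have hww : w'' ≠ w := fun hc => hne' (by rw [hr, hc])
              have hle : (I.mpref m).idxOf w'' ≤ (I.mpref m).idxOf w := by
                by_contra hcon
                exact hnmp ⟨hwmem, Or.inr (by omega)⟩
              have hidx : (I.mpref m).idxOf w'' ≠ (I.mpref m).idxOf w :=
                fun hc => hww ((List.idxOf_inj hw'' (y := w)).mp hc)
              have hltw : (I.mpref m).idxOf w'' < (I.mpref m).idxOf w := by omega
              have hmwk : I₁.mWeak m (μ₁.μm m) (μW.μm m) := ho1.2 μW hWst1 m
              rw [hr] at hmwk
              rcases hmwk with heq | ⟨w₃, hw₃, hp₃⟩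
              · rw [heq] at hmp
                have := (mPref_congr hm2).mp hmp
                rcases this.2 with hno | hlt
                · exact hno hw''
                · omega
              · rw [hw₃] at hmp
                have hmpI := (mPref_congr hm2).mp hmp
                have hp₃I := (mPref_congr hm1).mp hp₃
                have hw₃m : w₃ ∈ I.mpref m := mPref_mem hp₃I
                have h1 : (I.mpref m).idxOf w₃ < (I.mpref m).idxOf w'' := by
                  rcases hp₃I.2 with hno | hlt
                  · exact absurd hw'' hno
                  · exact hlt
                have h2 : (I.mpref m).idxOf w < (I.mpref m).idxOf w₃ := by
                  rcases hmpI.2 with hno | hlt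
                  · exact absurd hw₃m hno
                  · exact hlt
                omega
          · -- w matched in μW, unmatched in μ₁ : impossible by lone wolf
            have hs : (μ₁.μw w).isSome :=
              matched_of_menOptimal ho1 hWst1 (w := w) (by rw [hqW]; rfl)
            rw [hq] at hs
            cases hs
        · -- w matched in μ₁ to p ∈ I₁-list, m outside I₁-list: w cannot prefer m
          have hpmem : p ∈ I₁.wpref w := (hst1.1 p w ((μ₁.consistent p w).mpr hq)).2
          have hpmem2 : p ∈ I₂.wpref w := (hp12 w).subset hpmem
          rw [hq] at hwp
          rcases hwp.2 with hno | hlt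
          · exact hno hpmem2
          · have e1 : (I₂.wpref w).idxOf p = (I₁.wpref w).idxOf p :=
              indexOf_of_prefix (hp12 w) hpmem
            have e2 : (I₁.wpref w).length ≤ (I₂.wpref w).idxOf m :=
              length_le_indexOf_of_prefix (hp12 w) hmem
            have e3 : (I₁.wpref w).idxOf p < (I₁.wpref w).length :=
              List.idxOf_lt_length_iff.mpr hpmem
            omega
  -- conclude via women-pessimality of μ₂ in I₂
  intro w
  rcases womenPessimal ho2 hst12 w with heq | ⟨m, hm, hwp⟩
  · exact Or.inl heq
  · refine Or.inr ⟨m, hm, ?_⟩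
    exact (wPref_transfer (hp2 w) (wPref_mem hwp)
      (fun p hp => (ho2.1.1 p w ((μ₂.consistent p w).mpr hp)).2)).mp hwp
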